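/- Let R be a left artinian ring and let 0 → U₁ →f M →g U₂ → 0 be a short exact sequence of finitely generated left R-modules (f injective, g surjective, im f = ker g) in which U₁ and U₂ are uniserial. Then either M is indecomposable, or there exist uniserial submodules M₁ and M₂ of M such that M is the internal direct sum of M₁ and M₂. -/
import Mathlib


/-- A module is *uniserial* if its submodules are totally ordered by inclusion. -/
def IsUniserialModule (R M : Type) [Ring R] [AddCommGroup M] [Module R M] : Prop :=
  ∀ N₁ N₂ : Submodule R M, N₁ ≤ N₂ ∨ N₂ ≤ N₁

/-- The Jacobson radical of the ring `R` (the intersection of the maximal left ideals). -/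
noncomputable def ringJacobson (R : Type) [Ring R] : Ideal R :=
  Ideal.jacobson (⊥ : Ideal R)

/-- The submodule `J•M`, where `J` is the Jacobson radical of `R`. -/
noncomputable def radicalSubmodule (R M : Type) [Ring R] [AddCommGroup M] [Module R M] :
    Submodule R M :=
  ringJacobson R • (⊤ : Submodule R M)

/-- The socle of a module: the sum of all of its simple submodules. -/
def socle (R M : Type) [Ring R] [AddCommGroup M] [Module R M] : Submodule R M :=
  sSup {N : Submodule R M | IsSimpleModule R ↥N}

/-- A linear map is a split monomorphism if it has a left inverse. -/
def IsSplitMono {R M N : Type} [Ring R] [AddCommGroup M] [Module R M]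
    [AddCommGroup N] [Module R N] (f : M →ₗ[R] N) : Prop :=
  ∃ g : N →ₗ[R] M, g ∘ₗ f = LinearMap.id

/-- A linear map is a split epimorphism if it has a right inverse. -/
def IsSplitEpi {R M N : Type} [Ring R] [AddCommGroup M] [Module R M]
    [AddCommGroup N] [Module R N] (f : M →ₗ[R] N) : Prop :=
  ∃ g : N →ₗ[R] M, f ∘ₗ g = LinearMap.id

/-- A linear map `f : M → N` is *irreducible* if it is neither a split monomorphism nor a
split epimorphism, and in any factorization `f = g ∘ h`, either `h` is a split monomorphism
or `g` is a split epimorphism. -/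
def IsIrreducibleMap {R M N : Type} [Ring R] [AddCommGroup M] [Module R M]
    [AddCommGroup N] [Module R N] (f : M →ₗ[R] N) : Prop :=
  ¬ IsSplitMono f ∧ ¬ IsSplitEpi f ∧
    ∀ (X : Type) [AddCommGroup X] [Module R X] (h : M →ₗ[R] X) (g : X →ₗ[R] N),
      g ∘ₗ h = f → IsSplitMono h ∨ IsSplitEpi g

/-- A module is *indecomposable* if it is nonzero and is not the internal direct sum of two
nonzero submodules. -/
def IsIndecomposableModule (R M : Type) [Ring R] [AddCommGroup M] [Module R M] : Prop :=
  Nontrivial M ∧ ∀ N₁ N₂ : Submodule R M, IsCompl N₁ N₂ → N₁ = ⊥ ∨ N₂ = ⊥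

section Aux

variable {R M : Type} [Ring R] [AddCommGroup M] [Module R M]

/-- Transfer a chain condition on submodules of `M` below `N` to uniseriality of `↥N`. -/
lemma uniserial_of_forall_le {N : Submodule R M}
    (h : ∀ X Y : Submodule R M, X ≤ N → Y ≤ N → X ≤ Y ∨ Y ≤ X) :
    ∀ X Y : Submodule R ↥N, X ≤ Y ∨ Y ≤ X := by
  intro X Y
  rcases h (X.map N.subtype) (Y.map N.subtype) (Submodule.map_subtype_le N X)
      (Submodule.map_subtype_le N Y) with h' | h'
  · exact Or.inl ((Submodule.map_le_map_iff_of_injective N.injective_subtype X Y).mp h')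
  · exact Or.inr ((Submodule.map_le_map_iff_of_injective N.injective_subtype Y X).mp h')

/-- Key sandwich lemma: if `V ≤ U' ≤ W` with `V ≠ U'`, everything below `U'` is a chain,
and the interval `[V, W]` is a chain, then everything below `W` is a chain. -/
lemma chain_of_sandwich (W V U' : Submodule R M)
    (hVU : V ≤ U') (hUW : U' ≤ W) (hne : V ≠ U')
    (hc : ∀ X Y : Submodule R M, X ≤ U' → Y ≤ U' → X ≤ Y ∨ Y ≤ X)
    (hb : ∀ X Y : Submodule R M, V ≤ X → X ≤ W → V ≤ Y → Y ≤ W → X ≤ Y ∨ Y ≤ X) :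
    ∀ X Y : Submodule R M, X ≤ W → Y ≤ W → X ≤ Y ∨ Y ≤ X := by
  have claim : ∀ X : Submodule R M, X ≤ W → X ≤ V ∨ V ≤ X := by
    intro X hXW
    rcases hb (X ⊔ V) U' le_sup_right (sup_le hXW (hVU.trans hUW)) hVU hUW with h | h
    · exact hc X V (le_sup_left.trans h) hVU
    · -- U' ≤ X ⊔ V
      have hmod : (V ⊔ X) ⊓ U' = V ⊔ X ⊓ U' := sup_inf_assoc_of_le X hVU
      have h1 : (V ⊔ X) ⊓ U' = U' := inf_eq_right.mpr (h.trans (sup_comm X V).le)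
      rcases hc (X ⊓ U') V inf_le_right hVU with h2 | h2
      · exfalso
        apply hne
        rw [← h1, hmod, sup_eq_left.mpr h2]
      · exact Or.inr (h2.trans inf_le_left)
  intro X Y hX hY
  rcases claim X hX with h1 | h1
  · rcases claim Y hY with h2 | h2
    · exact hc X Y (h1.trans hVU) (h2.trans hVU)
    · exact Or.inl (h1.trans h2)
  · rcases claim Y hY with h2 | h2
    · exact Or.inr (h2.trans h1)
    · exact hb X Y h1 hX h2 hY

/-- If `U` has all submodules below it a chain and all submodules above it a chain
(i.e. `U` and `M/U` are uniserial), `N₁, N₂` are complementary with `N₂ ≠ ⊥` and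
`U ⊓ N₂ = ⊥`, then both `N₁` and `N₂` carry chains of submodules. -/
lemma both_chains (U N₁ N₂ : Submodule R M)
    (hU1 : ∀ X Y : Submodule R M, X ≤ U → Y ≤ U → X ≤ Y ∨ Y ≤ X)
    (hU2 : ∀ X Y : Submodule R M, U ≤ X → U ≤ Y → X ≤ Y ∨ Y ≤ X)
    (hcompl : IsCompl N₁ N₂) (h2 : N₂ ≠ ⊥) (hdisj : U ⊓ N₂ = ⊥) :
    (∀ X Y : Submodule R M, X ≤ N₁ → Y ≤ N₁ → X ≤ Y ∨ Y ≤ X) ∧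
      (∀ X Y : Submodule R M, X ≤ N₂ → Y ≤ N₂ → X ≤ Y ∨ Y ≤ X) := by
  have hinf : N₁ ⊓ N₂ = ⊥ := disjoint_iff.mp hcompl.disjoint
  have hsup : N₁ ⊔ N₂ = ⊤ := codisjoint_iff.mp hcompl.codisjoint
  -- unmixing through the complement
  have unmix : ∀ Z : Submodule R M, Z ≤ N₁ → (Z ⊔ N₂) ⊓ N₁ = Z := by
    intro Z hZ
    rw [sup_inf_assoc_of_le N₂ hZ, inf_comm N₂ N₁, hinf, sup_bot_eq]
  have remix : ∀ Z : Submodule R M, Z ≤ U ⊔ N₂ → ((Z ⊔ N₂) ⊓ U) ⊔ N₂ = Z ⊔ N₂ := by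
    intro Z hZ
    have hmod : (N₂ ⊔ U) ⊓ (Z ⊔ N₂) = N₂ ⊔ U ⊓ (Z ⊔ N₂) :=
      sup_inf_assoc_of_le U le_sup_right
    calc ((Z ⊔ N₂) ⊓ U) ⊔ N₂ = N₂ ⊔ U ⊓ (Z ⊔ N₂) := by rw [sup_comm, inf_comm]
      _ = (N₂ ⊔ U) ⊓ (Z ⊔ N₂) := hmod.symm
      _ = Z ⊔ N₂ := inf_eq_right.mpr (by rw [sup_comm N₂ U]; exact sup_le hZ le_sup_right)
  -- the N₂ part
  have hN2 : ∀ X Y : Submodule R M, X ≤ N₂ → Y ≤ N₂ → X ≤ Y ∨ Y ≤ X := by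
    have key : ∀ X Y : Submodule R M, X ≤ N₂ → Y ≤ N₂ → X ⊔ U ≤ Y ⊔ U → X ≤ Y := by
      intro X Y hX hY h
      have hmod : (Y ⊔ U) ⊓ N₂ = Y ⊔ U ⊓ N₂ := sup_inf_assoc_of_le U hY
      calc X ≤ (X ⊔ U) ⊓ N₂ := le_inf le_sup_left hX
        _ ≤ (Y ⊔ U) ⊓ N₂ := inf_le_inf_right N₂ h
        _ = Y := by rw [hmod, hdisj, sup_bot_eq]
    intro X Y hX hY
    rcases hU2 (X ⊔ U) (Y ⊔ U) le_sup_right le_sup_right with h | h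
    · exact Or.inl (key X Y hX hY h)
    · exact Or.inr (key Y X hY hX h)
  refine ⟨?_, hN2⟩
  rcases hU2 (U ⊔ N₁) (U ⊔ N₂) le_sup_left le_sup_left with hcase | hcase
  · -- here U ⊔ N₂ = ⊤, so N₁ is "isomorphic" to U
    have htop : U ⊔ N₂ = ⊤ := by
      apply eq_top_iff.mpr
      calc (⊤ : Submodule R M) = N₁ ⊔ N₂ := hsup.symm
        _ ≤ (U ⊔ N₁) ⊔ N₂ := sup_le_sup_right le_sup_right N₂
        _ ≤ (U ⊔ N₂) ⊔ N₂ := sup_le_sup_right hcase N₂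
        _ = U ⊔ N₂ := by rw [sup_assoc, sup_idem]
    have key : ∀ X Y : Submodule R M, X ≤ N₁ → Y ≤ N₁ →
        (X ⊔ N₂) ⊓ U ≤ (Y ⊔ N₂) ⊓ U → X ≤ Y := by
      intro X Y hX hY h
      have h2 : X ⊔ N₂ ≤ Y ⊔ N₂ := by
        rw [← remix X (htop ▸ le_top), ← remix Y (htop ▸ le_top)]
        exact sup_le_sup_right h N₂
      calc X = (X ⊔ N₂) ⊓ N₁ := (unmix X hX).symm
        _ ≤ (Y ⊔ N₂) ⊓ N₁ := inf_le_inf_right N₁ h2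
        _ = Y := unmix Y hY
    intro X Y hX hY
    rcases hU1 ((X ⊔ N₂) ⊓ U) ((Y ⊔ N₂) ⊓ U) inf_le_right inf_le_right with h | h
    · exact Or.inl (key X Y hX hY h)
    · exact Or.inr (key Y X hY hX h)
  · -- here U ⊔ N₁ = ⊤; use the sandwich lemma with V = U ⊓ N₁, U' = (U ⊔ N₂) ⊓ N₁
    have htop : U ⊔ N₁ = ⊤ := by
      apply eq_top_iff.mpr
      calc (⊤ : Submodule R M) = N₁ ⊔ N₂ := hsup.symm
        _ = N₂ ⊔ N₁ := sup_comm N₁ N₂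
        _ ≤ (U ⊔ N₂) ⊔ N₁ := sup_le_sup_right le_sup_right N₁
        _ ≤ (U ⊔ N₁) ⊔ N₁ := sup_le_sup_right hcase N₁
        _ = U ⊔ N₁ := by rw [sup_assoc, sup_idem]
    set V : Submodule R M := U ⊓ N₁ with hVdef
    set U' : Submodule R M := (U ⊔ N₂) ⊓ N₁ with hU'def
    have hVU' : V ≤ U' := le_inf (inf_le_left.trans le_sup_left) inf_le_right
    have hU'W : U' ≤ N₁ := inf_le_right
    have hne : V ≠ U' := by
      intro h
      have e1 : U' ⊔ N₂ = U ⊔ N₂ := by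
        have hmod : (N₂ ⊔ N₁) ⊓ (U ⊔ N₂) = N₂ ⊔ N₁ ⊓ (U ⊔ N₂) :=
          sup_inf_assoc_of_le N₁ le_sup_right
        calc U' ⊔ N₂ = N₂ ⊔ N₁ ⊓ (U ⊔ N₂) := by rw [sup_comm, hU'def, inf_comm]
          _ = (N₂ ⊔ N₁) ⊓ (U ⊔ N₂) := hmod.symm
          _ = U ⊔ N₂ := by rw [sup_comm N₂ N₁, hsup, top_inf_eq]
      have hUle : U ≤ V ⊔ N₂ := by
        calc U ≤ U ⊔ N₂ := le_sup_left
          _ = U' ⊔ N₂ := e1.symm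
          _ = V ⊔ N₂ := by rw [← h]
      have hUV : U = V := by
        have hmod : (V ⊔ N₂) ⊓ U = V ⊔ N₂ ⊓ U :=
          sup_inf_assoc_of_le N₂ (inf_le_left : V ≤ U)
        have h3 : (V ⊔ N₂) ⊓ U = U := inf_eq_right.mpr hUle
        rw [h3] at hmod
        rw [hmod, inf_comm N₂ U, hdisj, sup_bot_eq]
      have hUN1 : U ≤ N₁ := hUV.le.trans inf_le_right
      have hN1top : N₁ = ⊤ := by rw [← htop, sup_eq_right.mpr hUN1]
      apply h2
      rw [← le_bot_iff, ← hinf, hN1top]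
      exact le_inf le_top le_rfl
    have hb : ∀ X Y : Submodule R M, V ≤ X → X ≤ N₁ → V ≤ Y → Y ≤ N₁ →
        X ≤ Y ∨ Y ≤ X := by
      have r : ∀ Z : Submodule R M, V ≤ Z → Z ≤ N₁ → (Z ⊔ U) ⊓ N₁ = Z := by
        intro Z h1 h2'
        rw [sup_inf_assoc_of_le U h2']
        exact sup_eq_left.mpr h1
      intro X Y h1' h2' h3' h4'
      rcases hU2 (X ⊔ U) (Y ⊔ U) le_sup_right le_sup_right with h | h
      · left
        calc X = (X ⊔ U) ⊓ N₁ := (r X h1' h2').symm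
          _ ≤ (Y ⊔ U) ⊓ N₁ := inf_le_inf_right N₁ h
          _ = Y := r Y h3' h4'
      · right
        calc Y = (Y ⊔ U) ⊓ N₁ := (r Y h3' h4').symm
          _ ≤ (X ⊔ U) ⊓ N₁ := inf_le_inf_right N₁ h
          _ = X := r X h1' h2'
    have hcU' : ∀ X Y : Submodule R M, X ≤ U' → Y ≤ U' → X ≤ Y ∨ Y ≤ X := by
      have r3 : ∀ Z : Submodule R M, Z ≤ U' → (Z ⊔ N₂) ⊓ N₁ = Z := fun Z hZ =>
        unmix Z (hZ.trans inf_le_right)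
      have key : ∀ X Y : Submodule R M, X ≤ U' → Y ≤ U' →
          (X ⊔ N₂) ⊓ U ≤ (Y ⊔ N₂) ⊓ U → X ≤ Y := by
        intro X Y hX hY h
        have h2' : X ⊔ N₂ ≤ Y ⊔ N₂ := by
          rw [← remix X (hX.trans inf_le_left), ← remix Y (hY.trans inf_le_left)]
          exact sup_le_sup_right h N₂
        calc X = (X ⊔ N₂) ⊓ N₁ := (r3 X hX).symm
          _ ≤ (Y ⊔ N₂) ⊓ N₁ := inf_le_inf_right N₁ h2'
          _ = Y := r3 Y hY
      intro X Y hX hY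
      rcases hU1 ((X ⊔ N₂) ⊓ U) ((Y ⊔ N₂) ⊓ U) inf_le_right inf_le_right with h | h
      · exact Or.inl (key X Y hX hY h)
      · exact Or.inr (key Y X hY hX h)
    exact chain_of_sandwich N₁ V U' hVU' hU'W hne hcU' hb

end Aux

/-- If `0 → U₁ → M → U₂ → 0` is a short exact sequence of finitely generated modules over a
left artinian ring, with `U₁` and `U₂` uniserial, then `M` is either indecomposable or an
internal direct sum of two uniserial submodules. -/
theorem middle_term_of_uniserial_extension
    (R U₁ M U₂ : Type) [Ring R] [IsArtinianRing R]
    [AddCommGroup U₁] [Module R U₁] [Module.Finite R U₁]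
    [AddCommGroup M] [Module R M] [Module.Finite R M]
    [AddCommGroup U₂] [Module R U₂] [Module.Finite R U₂]
    (hU₁ : IsUniserialModule R U₁) (hU₂ : IsUniserialModule R U₂)
    (f : U₁ →ₗ[R] M) (g : M →ₗ[R] U₂)
    (hfinj : Function.Injective f) (hgsurj : Function.Surjective g)
    (hexact : LinearMap.range f = LinearMap.ker g) :
    IsIndecomposableModule R M ∨
      ∃ M₁ M₂ : Submodule R M, IsCompl M₁ M₂ ∧
        IsUniserialModule R ↥M₁ ∧ IsUniserialModule R ↥M₂ := by
  classical
  by_cases hsub : Subsingleton M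
  · right
    refine ⟨⊥, ⊤, isCompl_bot_top, ?_, ?_⟩ <;>
    · intro X Y
      left
      intro x _
      have hx0 : x = 0 := Subsingleton.elim x 0
      rw [hx0]
      exact Y.zero_mem
  · have hnt : Nontrivial M := not_subsingleton_iff_nontrivial.mp hsub
    by_cases hdec : ∀ N₁ N₂ : Submodule R M, IsCompl N₁ N₂ → N₁ = ⊥ ∨ N₂ = ⊥
    · exact Or.inl ⟨hnt, hdec⟩
    right
    push_neg at hdec
    obtain ⟨N₁, N₂, hcompl, hne1, hne2⟩ := hdec
    set U : Submodule R M := LinearMap.range f with hUdef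
    have hU1c : ∀ X Y : Submodule R M, X ≤ U → Y ≤ U → X ≤ Y ∨ Y ≤ X := by
      intro X Y hX hY
      have eX : Submodule.map f (Submodule.comap f X) = X := by
        rw [Submodule.map_comap_eq, inf_eq_right.mpr hX]
      have eY : Submodule.map f (Submodule.comap f Y) = Y := by
        rw [Submodule.map_comap_eq, inf_eq_right.mpr hY]
      rcases hU₁ (X.comap f) (Y.comap f) with h | h
      · left; rw [← eX, ← eY]; exact Submodule.map_mono h
      · right; rw [← eX, ← eY]; exact Submodule.map_mono h
    have hU2c : ∀ X Y : Submodule R M, U ≤ X → U ≤ Y → X ≤ Y ∨ Y ≤ X := by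
      intro X Y hX hY
      have hX' : LinearMap.ker g ≤ X := by rw [← hexact]; exact hX
      have hY' : LinearMap.ker g ≤ Y := by rw [← hexact]; exact hY
      have eX : Submodule.comap g (Submodule.map g X) = X := by
        rw [Submodule.comap_map_eq, sup_eq_left.mpr hX']
      have eY : Submodule.comap g (Submodule.map g Y) = Y := by
        rw [Submodule.comap_map_eq, sup_eq_left.mpr hY']
      rcases hU₂ (X.map g) (Y.map g) with h | h
      · left; rw [← eX, ← eY]; exact Submodule.comap_mono h
      · right; rw [← eX, ← eY]; exact Submodule.comap_mono h
    have hinf : N₁ ⊓ N₂ = ⊥ := disjoint_iff.mp hcompl.disjoint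
    rcases hU1c (U ⊓ N₁) (U ⊓ N₂) inf_le_left inf_le_left with hcmp | hcmp
    · have hd : U ⊓ N₁ = ⊥ := by
        have h := le_inf (inf_le_right : U ⊓ N₁ ≤ N₁) (hcmp.trans inf_le_right)
        exact le_bot_iff.mp (h.trans_eq hinf)
      obtain ⟨hA, hB⟩ := both_chains U N₂ N₁ hU1c hU2c hcompl.symm hne1 hd
      exact ⟨N₁, N₂, hcompl, fun X Y => uniserial_of_forall_le hB X Y,
        fun X Y => uniserial_of_forall_le hA X Y⟩
    · have hd : U ⊓ N₂ = ⊥ := by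
        have h := le_inf (hcmp.trans inf_le_right) (inf_le_right : U ⊓ N₂ ≤ N₂)
        exact le_bot_iff.mp (h.trans_eq hinf)
      obtain ⟨hA, hB⟩ := both_chains U N₁ N₂ hU1c hU2c hcompl hne2 hd
      exact ⟨N₁, N₂, hcompl, fun X Y => uniserial_of_forall_le hA X Y,
        fun X Y => uniserial_of_forall_le hB X Y⟩
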